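/- Let P ↣ N ↠ M be a short exact sequence of R-modules where N is (n,d)-coherent, M is finitely n-presented, and P has projective dimension at most d-1. Then P is (n,d)-coherent. -/
import Mathlib

universe u

/-- `M` is a finitely `n`-presented `R`-module. -/
def FinNPres (R : Type u) [Ring R] : ℕ → (M : Type u) → [AddCommGroup M] → [Module R M] → Prop
  | 0, M, _, _ => Module.Finite R M
  | n+1, M, _, _ => ∃ (k : ℕ) (f : (Fin k → R) →ₗ[R] M), Function.Surjective f ∧
      FinNPres R n (LinearMap.ker f)

section Helpers

variable (R : Type u) [Ring R]

theorem finNPres_equiv (n : ℕ) : ∀ (M M' : Type u) [AddCommGroup M] [Module R M]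
    [AddCommGroup M'] [Module R M'], (M ≃ₗ[R] M') → FinNPres R n M → FinNPres R n M' := by
  induction n with
  | zero =>
    intro M M' _ _ _ _ e h
    have : Module.Finite R M := h
    exact Module.Finite.equiv e
  | succ n ih =>
    intro M M' _ _ _ _ e h
    obtain ⟨k, f, hf, hker⟩ := h
    refine ⟨k, e.toLinearMap.comp f, e.surjective.comp hf, ?_⟩
    have hk : LinearMap.ker (e.toLinearMap.comp f) = LinearMap.ker f := by
      rw [LinearMap.ker_comp, LinearMap.ker_eq_bot.mpr e.injective, Submodule.comap_bot]
    rw [hk]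
    exact hker

theorem finNPres_mono (n : ℕ) : ∀ (M : Type u) [AddCommGroup M] [Module R M],
    FinNPres R (n+1) M → FinNPres R n M := by
  induction n with
  | zero =>
    intro M _ _ h
    obtain ⟨k, f, hf, _⟩ := h
    exact Module.Finite.of_surjective f hf
  | succ n ih =>
    intro M _ _ h
    obtain ⟨k, f, hf, hker⟩ := h
    exact ⟨k, f, hf, ih _ hker⟩

theorem finNPres_of_subsingleton (n : ℕ) : ∀ (M : Type u) [AddCommGroup M] [Module R M],
    Subsingleton M → FinNPres R n M := by
  induction n with
  | zero =>
    intro M _ _ hM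
    exact Module.Finite.of_surjective (0 : ((Fin 0 → R)) →ₗ[R] M)
      (fun m => ⟨0, Subsingleton.elim _ _⟩)
  | succ n ih =>
    intro M _ _ hM
    refine ⟨0, 0, fun m => ⟨0, Subsingleton.elim _ _⟩, ?_⟩
    exact ih _ inferInstance

theorem finNPres_pi (n : ℕ) : ∀ (k : ℕ), FinNPres R n (Fin k → R) := by
  induction n with
  | zero => intro k; show Module.Finite R _; infer_instance
  | succ n ih =>
    intro k
    refine ⟨k, LinearMap.id, Function.surjective_id, ?_⟩
    have : Subsingleton ↥(LinearMap.ker (LinearMap.id : (Fin k → R) →ₗ[R] (Fin k → R))) := by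
      rw [LinearMap.ker_id]
      infer_instance
    exact finNPres_of_subsingleton R n _ this

theorem finNPres_succ_of {n k : ℕ} {F M : Type u} [AddCommGroup F] [Module R F]
    [AddCommGroup M] [Module R M] (E : (Fin k → R) ≃ₗ[R] F) (q : F →ₗ[R] M)
    (hq : Function.Surjective q) (hker : FinNPres R n (LinearMap.ker q)) :
    FinNPres R (n + 1) M := by
  refine ⟨k, q.comp E.toLinearMap, hq.comp E.surjective, ?_⟩
  have h1 : LinearMap.ker (q.comp E.toLinearMap)
      = Submodule.map E.symm.toLinearMap (LinearMap.ker q) := by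
    rw [LinearMap.ker_comp]
    ext x
    constructor
    · intro h; exact ⟨E x, h, by simp⟩
    · rintro ⟨y, hy, rfl⟩; simpa using hy
  rw [h1]
  exact finNPres_equiv R n _ _ (E.symm.submoduleMap (LinearMap.ker q)) hker

end Helpers

section Ext
variable (R : Type u) [Ring R]

theorem finNPres_ext (n : ℕ) : ∀ (A B C : Type u) [AddCommGroup A] [Module R A]
    [AddCommGroup B] [Module R B] [AddCommGroup C] [Module R C]
    (i : A →ₗ[R] B) (p : B →ₗ[R] C), Function.Injective i → Function.Surjective p →
    LinearMap.range i = LinearMap.ker p →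
    FinNPres R n A → FinNPres R n C → FinNPres R n B := by
  induction n with
  | zero =>
    intro A B C _ _ _ _ _ _ i p hi hp hex hA hC
    have hA' : Module.Finite R A := hA
    have hC' : Module.Finite R C := hC
    show Module.Finite R B
    rw [Module.finite_def]
    apply Submodule.fg_of_fg_map_of_fg_inf_ker p
    · rw [Submodule.map_top, LinearMap.range_eq_top.mpr hp]
      exact Module.finite_def.mp hC'
    · rw [top_inf_eq, ← hex, ← Submodule.map_top]
      exact Submodule.FG.map i (Module.finite_def.mp hA')
  | succ n ih =>
    intro A B C _ _ _ _ _ _ i p hi hp hex hA hC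
    obtain ⟨ka, πa, hπa, hka⟩ := hA
    obtain ⟨kc, πc, hπc, hkc⟩ := hC
    classical
    set b := Pi.basisFun R (Fin kc) with hb
    choose sec hsec using fun j => hp (πc (b j))
    set h : (Fin kc → R) →ₗ[R] B := b.constr ℕ sec with hhdef
    have hph : p.comp h = πc := b.ext fun j => by
      simp only [LinearMap.comp_apply, hhdef, Module.Basis.constr_basis, hsec]
    have hph' : ∀ v, p (h v) = πc v := fun v => by
      have := congrArg (fun φ => φ v) hph; simpa using this
    set π : (Fin ka → R) × (Fin kc → R) →ₗ[R] B := (i.comp πa).coprod h with hπdef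
    have hπval : ∀ x : (Fin ka → R) × (Fin kc → R), π x = i (πa x.1) + h x.2 := fun x => rfl
    have hπ : Function.Surjective π := by
      intro x
      obtain ⟨v, hv⟩ := hπc (p x)
      have hxv : x - h v ∈ LinearMap.range i := by
        rw [hex, LinearMap.mem_ker, map_sub, hph', hv, sub_self]
      obtain ⟨a, ha⟩ := hxv
      obtain ⟨w, hw⟩ := hπa a
      exact ⟨(w, v), by rw [hπval, hw, ha]; abel⟩
    set E : (Fin (ka + kc) → R) ≃ₗ[R] (Fin ka → R) × (Fin kc → R) :=
      (LinearEquiv.funCongrLeft R R finSumFinEquiv).trans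
        (LinearEquiv.sumArrowLequivProdArrow _ _ R R) with hE
    apply finNPres_succ_of R E π hπ
    -- the kernel of π is an extension of (ker πa) by (ker πc)
    have hmemι : ∀ x : ↥(LinearMap.ker πa),
        ((LinearMap.inl R (Fin ka → R) (Fin kc → R)).comp (LinearMap.ker πa).subtype) x
          ∈ LinearMap.ker π := by
      intro x
      have hx : πa x.1 = 0 := x.2
      simp [LinearMap.mem_ker, hπval, hx]
    set ι : ↥(LinearMap.ker πa) →ₗ[R] ↥(LinearMap.ker π) :=
      LinearMap.codRestrict _ _ hmemι with hι
    have hmemφ : ∀ z : ↥(LinearMap.ker π),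
        ((LinearMap.snd R (Fin ka → R) (Fin kc → R)).comp (LinearMap.ker π).subtype) z
          ∈ LinearMap.ker πc := by
      intro z
      have hz : π z.1 = 0 := z.2
      have : p (π z.1) = 0 := by rw [hz, map_zero]
      rw [hπval, map_add, hph'] at this
      have hpi : p (i (πa z.1.1)) = 0 := by
        have : i (πa z.1.1) ∈ LinearMap.ker p := hex ▸ LinearMap.mem_range_self _ _
        exact this
      rw [hpi, zero_add] at this
      exact this
    set φ : ↥(LinearMap.ker π) →ₗ[R] ↥(LinearMap.ker πc) :=
      LinearMap.codRestrict _ _ hmemφ with hφ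
    have hιinj : Function.Injective ι := by
      intro x y hxy
      have : (x.1, (0 : Fin kc → R)) = (y.1, (0 : Fin kc → R)) :=
        congrArg Subtype.val hxy
      exact Subtype.ext (congrArg Prod.fst this)
    have hφsurj : Function.Surjective φ := by
      rintro ⟨c, hc⟩
      have hhc : h c ∈ LinearMap.range i := by
        rw [hex, LinearMap.mem_ker, hph']
        exact hc
      obtain ⟨a, ha⟩ := hhc
      obtain ⟨w, hw⟩ := hπa a
      have hmem : ((-w, c) : (Fin ka → R) × (Fin kc → R)) ∈ LinearMap.ker π := by
        rw [LinearMap.mem_ker, hπval]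
        simp only [map_neg, hw, ha]
        abel
      exact ⟨⟨(-w, c), hmem⟩, rfl⟩
    have hexk : LinearMap.range ι = LinearMap.ker φ := by
      ext z
      constructor
      · rintro ⟨x, rfl⟩
        apply Subtype.ext
        show (x.1, (0 : Fin kc → R)).2 = 0
        rfl
      · intro hz
        have hz2 : z.1.2 = 0 := congrArg Subtype.val hz
        have hz1 : πa z.1.1 = 0 := by
          have hπz : π z.1 = 0 := z.2
          rw [hπval, hz2, map_zero, add_zero] at hπz
          exact hi (by rw [hπz, map_zero])
        refine ⟨⟨z.1.1, hz1⟩, ?_⟩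
        apply Subtype.ext
        show (z.1.1, (0 : Fin kc → R)) = z.1
        rw [← hz2]
    exact ih _ _ _ ι φ hιinj hφsurj hexk hka hkc

end Ext

section Quot
variable (R : Type u) [Ring R]

/-- Given a SES `A ↣ B ↠ C` and a surjection `π : F ↠ B`, the kernel of `p ∘ π` is an
extension of `ker π` by `A`. -/
theorem midker_data (A B C F : Type u) [AddCommGroup A] [Module R A]
    [AddCommGroup B] [Module R B] [AddCommGroup C] [Module R C]
    [AddCommGroup F] [Module R F]
    (i : A →ₗ[R] B) (p : B →ₗ[R] C) (hi : Function.Injective i)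
    (hex : LinearMap.range i = LinearMap.ker p)
    (π : F →ₗ[R] B) (hπ : Function.Surjective π) :
    ∃ (ι : ↥(LinearMap.ker π) →ₗ[R] ↥(LinearMap.ker (p.comp π)))
      (ψ : ↥(LinearMap.ker (p.comp π)) →ₗ[R] A),
      Function.Injective ι ∧ Function.Surjective ψ ∧ LinearMap.range ι = LinearMap.ker ψ := by
  have hle : LinearMap.ker π ≤ LinearMap.ker (p.comp π) := by
    intro x hx
    rw [LinearMap.mem_ker] at hx ⊢
    rw [LinearMap.comp_apply, hx, map_zero]
  set ι := Submodule.inclusion hle with hιdef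
  set eA : A ≃ₗ[R] ↥(LinearMap.range i) := LinearEquiv.ofInjective i hi with heA
  have hrange : ∀ x : ↥(LinearMap.ker (p.comp π)),
      (π.comp (LinearMap.ker (p.comp π)).subtype) x ∈ LinearMap.range i := by
    intro x
    rw [hex, LinearMap.mem_ker]
    exact x.2
  set ψ : ↥(LinearMap.ker (p.comp π)) →ₗ[R] A :=
    eA.symm.toLinearMap.comp (LinearMap.codRestrict _ _ hrange) with hψdef
  have hψval : ∀ x : ↥(LinearMap.ker (p.comp π)), i (ψ x) = π x.1 := by
    intro x
    have : (eA (ψ x) : B) = π x.1 := by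
      simp only [hψdef, LinearMap.comp_apply, LinearEquiv.coe_coe,
        LinearEquiv.apply_symm_apply]
      rfl
    rwa [heA, LinearEquiv.ofInjective_apply] at this
  refine ⟨ι, ψ, ?_, ?_, ?_⟩
  · intro x y hxy
    have h2 := congrArg Subtype.val hxy
    exact Subtype.ext h2
  · intro a
    have : i a ∈ LinearMap.ker p := hex ▸ LinearMap.mem_range_self _ _
    obtain ⟨x, hx⟩ := hπ (i a)
    have hxmem : x ∈ LinearMap.ker (p.comp π) := by
      rw [LinearMap.mem_ker, LinearMap.comp_apply, hx]
      exact this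
    refine ⟨⟨x, hxmem⟩, hi ?_⟩
    rw [hψval]
    exact hx
  · ext z
    constructor
    · rintro ⟨x, rfl⟩
      have : i (ψ (ι x)) = π x.1 := hψval _
      rw [LinearMap.mem_ker]
      apply hi
      rw [this, x.2, map_zero]
    · intro hz
      have hz' : ψ z = 0 := hz
      have : π z.1 = 0 := by
        rw [← hψval z, hz', map_zero]
      exact ⟨⟨z.1, this⟩, Subtype.ext rfl⟩

theorem finNPres_quot (n : ℕ) (A B C : Type u) [AddCommGroup A] [Module R A]
    [AddCommGroup B] [Module R B] [AddCommGroup C] [Module R C]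
    (i : A →ₗ[R] B) (p : B →ₗ[R] C) (hi : Function.Injective i)
    (hp : Function.Surjective p) (hex : LinearMap.range i = LinearMap.ker p)
    (hA : FinNPres R n A) (hB : FinNPres R n B) : FinNPres R n C := by
  cases n with
  | zero =>
    have : Module.Finite R B := hB
    exact Module.Finite.of_surjective p hp
  | succ n =>
    obtain ⟨k, π, hπ, hker⟩ := hB
    refine ⟨k, p.comp π, hp.comp hπ, ?_⟩
    obtain ⟨ι, ψ, hιinj, hψsurj, hexk⟩ := midker_data R A B C _ i p hi hex π hπ
    exact finNPres_ext R n _ _ _ ι ψ hιinj hψsurj hexk hker (finNPres_mono R n A hA)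

end Quot

section Ker
variable (R : Type u) [Ring R]

/-- If `M` is finitely `(n+1)`-presented and `q : R^k ↠ M`, then `ker q` is finitely
`n`-presented (Schanuel-type lemma). -/
theorem finNPres_ker (n k : ℕ) (M : Type u) [AddCommGroup M] [Module R M]
    (hM : FinNPres R (n + 1) M) (q : (Fin k → R) →ₗ[R] M) (hq : Function.Surjective q) :
    FinNPres R n ↥(LinearMap.ker q) := by
  classical
  obtain ⟨k', π, hπ, hker⟩ := hM
  set X : Submodule R ((Fin k → R) × (Fin k' → R)) :=
    LinearMap.ker (q.comp (LinearMap.fst R _ _) - π.comp (LinearMap.snd R _ _)) with hX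
  have hmem : ∀ x : (Fin k → R) × (Fin k' → R), x ∈ X ↔ q x.1 = π x.2 := by
    intro x
    rw [hX, LinearMap.mem_ker, LinearMap.sub_apply, sub_eq_zero]
    rfl
  set pr1 : ↥X →ₗ[R] (Fin k → R) := (LinearMap.fst R _ _).comp X.subtype with hpr1
  set pr2 : ↥X →ₗ[R] (Fin k' → R) := (LinearMap.snd R _ _).comp X.subtype with hpr2
  have hpr1s : Function.Surjective pr1 := by
    intro x
    obtain ⟨y, hy⟩ := hπ (q x)
    exact ⟨⟨(x, y), (hmem _).mpr hy.symm⟩, rfl⟩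
  have hmemι : ∀ z : ↥(LinearMap.ker π),
      ((LinearMap.inr R (Fin k → R) (Fin k' → R)).comp (LinearMap.ker π).subtype) z ∈ X := by
    intro z
    rw [hmem]
    show q 0 = π z.1
    rw [map_zero, z.2]
  set ι1 : ↥(LinearMap.ker π) →ₗ[R] ↥X := LinearMap.codRestrict _ _ hmemι with hι1
  have hι1inj : Function.Injective ι1 := by
    intro x y hxy
    have h2 := congrArg Subtype.val hxy
    exact Subtype.ext (congrArg Prod.snd h2)
  have hexX : LinearMap.range ι1 = LinearMap.ker pr1 := by
    ext z
    constructor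
    · rintro ⟨x, rfl⟩; rfl
    · intro hz
      have hz1 : z.1.1 = 0 := hz
      have hz2 : π z.1.2 = 0 := by
        have := (hmem z.1).mp z.2
        rw [hz1, map_zero] at this
        exact this.symm
      refine ⟨⟨z.1.2, hz2⟩, ?_⟩
      apply Subtype.ext
      show ((0 : Fin k → R), z.1.2) = z.1
      rw [← hz1]
  have hXpres : FinNPres R n ↥X :=
    finNPres_ext R n _ _ _ ι1 pr1 hι1inj hpr1s hexX hker (finNPres_pi R n k)
  -- splitting of pr2
  set b := Pi.basisFun R (Fin k') with hb
  choose sec hsec using fun j => hq (π (b j))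
  set s : (Fin k' → R) →ₗ[R] ↥X :=
    b.constr ℕ (fun j => ⟨(sec j, b j), (hmem _).mpr (hsec j)⟩) with hsdef
  have hs : pr2.comp s = LinearMap.id := b.ext fun j => by
    simp only [LinearMap.comp_apply, hsdef, Module.Basis.constr_basis, LinearMap.id_apply]
    rfl
  have hs' : ∀ v, pr2 (s v) = v := fun v => by
    have := congrArg (fun φ => φ v) hs; simpa using this
  have hssnd : ∀ v, (s v).1.2 = v := hs'
  set t : ↥X →ₗ[R] (Fin k → R) := pr1 - pr1.comp (s.comp pr2) with htdef
  have htval : ∀ x : ↥X, t x = x.1.1 - (s (pr2 x)).1.1 := fun x => rfl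
  have ht : ∀ x : ↥X, t x ∈ LinearMap.ker q := by
    intro x
    rw [LinearMap.mem_ker, htval, map_sub]
    have h1 : q x.1.1 = π x.1.2 := (hmem x.1).mp x.2
    have h2 : q ((s (pr2 x)).1.1) = π ((s (pr2 x)).1.2) := (hmem _).mp (s (pr2 x)).2
    rw [h1, h2, hssnd]
    show π x.1.2 - π x.1.2 = 0
    rw [sub_self]
  set r : ↥X →ₗ[R] ↥(LinearMap.ker q) := LinearMap.codRestrict _ t ht with hrdef
  have hsinj : Function.Injective s := by
    intro u v huv
    rw [← hs' u, ← hs' v, huv]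
  have hrsurj : Function.Surjective r := by
    rintro ⟨z, hz⟩
    have hzX : ((z, 0) : (Fin k → R) × (Fin k' → R)) ∈ X := by
      rw [hmem]
      show q z = π 0
      rw [map_zero]
      exact hz
    refine ⟨⟨(z, 0), hzX⟩, ?_⟩
    apply Subtype.ext
    show t _ = z
    rw [htval]
    have h0 : pr2 (⟨(z, 0), hzX⟩ : ↥X) = 0 := rfl
    rw [h0, map_zero]
    show z - (0 : ↥X).1.1 = z
    show z - 0 = z
    rw [sub_zero]
  have hexr : LinearMap.range s = LinearMap.ker r := by
    ext x
    constructor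
    · rintro ⟨v, rfl⟩
      rw [LinearMap.mem_ker]
      apply Subtype.ext
      show t (s v) = 0
      rw [htval, hs', sub_self]
    · intro hx
      have hx' : t x = 0 := congrArg Subtype.val hx
      rw [htval, sub_eq_zero] at hx'
      refine ⟨pr2 x, ?_⟩
      apply Subtype.ext
      apply Prod.ext
      · exact hx'.symm
      · show (s (pr2 x)).1.2 = x.1.2
        rw [hssnd]
        rfl
  exact finNPres_quot R n _ _ _ s r hsinj hrsurj hexr (finNPres_pi R n k') hXpres

end Ker

section SES
variable (R : Type u) [Ring R]

/-- In a SES `P ↣ N ↠ M`, if `N` and `M` are finitely `(m+1)`-presented, then `P` is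
finitely `m`-presented. -/
theorem finNPres_of_ses (m : ℕ) (P N M : Type u) [AddCommGroup P] [Module R P]
    [AddCommGroup N] [Module R N] [AddCommGroup M] [Module R M]
    (f : P →ₗ[R] N) (g : N →ₗ[R] M) (hf : Function.Injective f)
    (hg : Function.Surjective g) (hex : LinearMap.range f = LinearMap.ker g)
    (hN : FinNPres R (m + 1) N) (hM : FinNPres R (m + 1) M) : FinNPres R m P := by
  obtain ⟨k, π, hπ, hker⟩ := hN
  have hkq : FinNPres R m ↥(LinearMap.ker (g.comp π)) :=
    finNPres_ker R m k M hM (g.comp π) (hg.comp hπ)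
  obtain ⟨ι, ψ, hιinj, hψsurj, hexk⟩ := midker_data R P N M _ f g hf hex π hπ
  exact finNPres_quot R m _ _ _ ι ψ hιinj hψsurj hexk hker hkq

end SES

/-- `M` has projective dimension at most `d` (finite `d`). -/
def ProjDimLE (R : Type u) [Ring R] : ℕ → (M : Type u) → [AddCommGroup M] → [Module R M] → Prop
  | 0, M, _, _ => Module.Projective R M
  | d+1, M, _, _ => ∃ (ι : Type u) (f : (ι →₀ R) →ₗ[R] M), Function.Surjective f ∧
      ProjDimLE R d (LinearMap.ker f)

/-- Projective dimension at most `d` for `d : ℕ∞`; `d = ⊤` imposes no condition. -/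
def ProjDimLE' (R : Type u) [Ring R] (d : ℕ∞) (M : Type u) [AddCommGroup M] [Module R M] : Prop :=
  ∀ k : ℕ, (k : ℕ∞) = d → ProjDimLE R k M

section PD
variable (R : Type u) [Ring R]

theorem projDimLE_equiv (d : ℕ) : ∀ (M M' : Type u) [AddCommGroup M] [Module R M]
    [AddCommGroup M'] [Module R M'], (M ≃ₗ[R] M') → ProjDimLE R d M → ProjDimLE R d M' := by
  induction d with
  | zero =>
    intro M M' _ _ _ _ e h
    have : Module.Projective R M := h
    exact Module.Projective.of_equiv e
  | succ d ih =>
    intro M M' _ _ _ _ e h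
    obtain ⟨ι, f, hf, hk⟩ := h
    refine ⟨ι, e.toLinearMap.comp f, e.surjective.comp hf, ?_⟩
    have hker : LinearMap.ker (e.toLinearMap.comp f) = LinearMap.ker f := by
      rw [LinearMap.ker_comp, LinearMap.ker_eq_bot.mpr e.injective, Submodule.comap_bot]
    rw [hker]
    exact hk

theorem projDimLE'_equiv (d : ℕ∞) (M M' : Type u) [AddCommGroup M] [Module R M]
    [AddCommGroup M'] [Module R M'] (e : M ≃ₗ[R] M') (h : ProjDimLE' R d M) :
    ProjDimLE' R d M' := fun k hk => projDimLE_equiv R k M M' e (h k hk)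

end PD

/-- `M` is an `(n,d)`-coherent `R`-module: it is finitely `n`-presented and every finitely
`(n-1)`-presented submodule of `M` of projective dimension at most `d-1` is finitely
`n`-presented. -/
def NDCohMod (R : Type u) [Ring R] (n : ℕ) (d : ℕ∞) (M : Type u)
    [AddCommGroup M] [Module R M] : Prop :=
  FinNPres R n M ∧ ∀ (N : Submodule R M), FinNPres R (n - 1) N →
    ProjDimLE' R (d - 1) N → FinNPres R n N

/-- Let `P ↣ N ↠ M` be a short exact sequence of `R`-modules with `N` an `(n,d)`-coherent
module, `M` finitely `n`-presented, and `pd P ≤ d - 1`.  Then `P` is `(n,d)`-coherent. -/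
theorem ndCohMod_kernel (R : Type u) [Ring R] (n : ℕ) (hn : 1 ≤ n) (d : ℕ∞) (hd : 1 ≤ d)
    (P N M : Type u) [AddCommGroup P] [Module R P] [AddCommGroup N] [Module R N]
    [AddCommGroup M] [Module R M] (f : P →ₗ[R] N) (g : N →ₗ[R] M)
    (hf : Function.Injective f) (hg : Function.Surjective g)
    (hex : LinearMap.range f = LinearMap.ker g)
    (hN : NDCohMod R n d N) (hM : FinNPres R n M) (hP : ProjDimLE' R (d - 1) P) :
    NDCohMod R n d P := by
  obtain ⟨m, rfl⟩ : ∃ m, n = m + 1 := ⟨n - 1, (Nat.succ_pred_eq_of_pos hn).symm⟩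
  have eP : P ≃ₗ[R] ↥(LinearMap.range f) := LinearEquiv.ofInjective f hf
  have hP1 : FinNPres R m P := finNPres_of_ses R m P N M f g hf hg hex hN.1 hM
  constructor
  · have h1 : FinNPres R m ↥(LinearMap.range f) := finNPres_equiv R m _ _ eP hP1
    have h2 : ProjDimLE' R (d - 1) ↥(LinearMap.range f) :=
      projDimLE'_equiv R (d - 1) _ _ eP hP
    have h3 : FinNPres R (m + 1) ↥(LinearMap.range f) := hN.2 (LinearMap.range f) h1 h2
    exact finNPres_equiv R (m + 1) _ _ eP.symm h3
  · intro Q hQ hQpd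
    have eQ : ↥Q ≃ₗ[R] ↥(Submodule.map f Q) := Submodule.equivMapOfInjective f hf Q
    have h3 : FinNPres R (m + 1) ↥(Submodule.map f Q) :=
      hN.2 (Submodule.map f Q) (finNPres_equiv R m _ _ eQ hQ)
        (projDimLE'_equiv R (d - 1) _ _ eQ hQpd)
    exact finNPres_equiv R (m + 1) _ _ eQ.symm h3
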